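/- arXiv:2409.01983 — 7 statements merged into one kernel-verified Lean document; each statement's English description precedes it below -/
import Mathlib

section
/- Let (Ω, ℱ, P) be a probability space carrying a treatment variable A (with levels 0 and a, each occurring with positive probability) and nonnegative potential outcomes T^0, T^a, assume no confounding (A independent of (T^0, T^a)) and consistency (T = T^a on {A = a}, T = T^0 on {A = 0}). Then for every t > 0, (1/t)·sup{s ∈ [0,∞) : P(T > s | A = 0) ≥ P(T > t | A = a)} = (1/t)·sup{s ∈ [0,∞) : P(T^0 > s) ≥ P(T^a > t)}; that is, the observed acceleration factor θ_m(t) equals the causal acceleration factor θ(t). -/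
open MeasureTheory ProbabilityTheory Filter Set

lemma cond_eq_marginal
    {Ω : Type*} [MeasurableSpace Ω] (P : Measure Ω) [IsProbabilityMeasure P]
    (A T T' : Ω → ℝ) (a : ℝ)
    (hA : Measurable A) (hT' : Measurable T')
    (hindep : ∀ s u : Set ℝ, MeasurableSet s → MeasurableSet u →
      P (A ⁻¹' s ∩ T' ⁻¹' u) = P (A ⁻¹' s) * P (T' ⁻¹' u))
    (hcons : ∀ ω, A ω = a → T ω = T' ω)
    (hpa : 0 < P {ω | A ω = a}) :
    ∀ t : ℝ, (P[|{ω | A ω = a}]) {ω | t < T ω} = P {ω | t < T' ω} := by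
  intro t
  have hmA : MeasurableSet {ω | A ω = a} := hA (measurableSet_singleton a)
  have hset : {ω | A ω = a} ∩ {ω | t < T ω} = {ω | A ω = a} ∩ {ω | t < T' ω} := by
    ext ω
    simp only [Set.mem_inter_iff, Set.mem_setOf_eq]
    constructor
    · rintro ⟨h1, h2⟩; exact ⟨h1, by rwa [← hcons ω h1]⟩
    · rintro ⟨h1, h2⟩; exact ⟨h1, by rwa [hcons ω h1]⟩
  have hind := hindep {a} (Set.Ioi t) (measurableSet_singleton a) measurableSet_Ioi
  have hpre1 : A ⁻¹' {a} = {ω | A ω = a} := by ext ω; simp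
  have hpre2 : T' ⁻¹' (Set.Ioi t) = {ω | t < T' ω} := by ext ω; simp
  rw [hpre1, hpre2] at hind
  rw [ProbabilityTheory.cond_apply hmA, hset, hind, ← mul_assoc,
    ENNReal.inv_mul_cancel hpa.ne' (measure_ne_top P _), one_mul]

/-- Theorem 1 of the paper: under no confounding, consistency, and positivity, the observed
acceleration factor `θ_m(t) = (1/t)·S_{T|A=0}⁻¹(S_{T|A=a}(t))` equals the causal acceleration
factor `θ(t) = (1/t)·S_{T⁰}⁻¹(S_{Tᵃ}(t))` for every `t > 0`, where the generalized inverse of a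
survival function `S` is `S⁻¹(p) = sup {s ∈ [0,∞) : S(s) ≥ p}`. -/
theorem observed_equals_causal_acceleration_factor
    {Ω : Type*} [MeasurableSpace Ω] (P : Measure Ω) [IsProbabilityMeasure P]
    (A T T0 Ta : Ω → ℝ) (a : ℝ)
    (hA : Measurable A) (hT : Measurable T) (hT0 : Measurable T0) (hTa : Measurable Ta)
    (hT0nn : ∀ ω, 0 ≤ T0 ω) (hTann : ∀ ω, 0 ≤ Ta ω)
    (hindep : IndepFun A (fun ω => (T0 ω, Ta ω)) P)
    (hconsa : ∀ ω, A ω = a → T ω = Ta ω)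
    (hcons0 : ∀ ω, A ω = 0 → T ω = T0 ω)
    (hpa : 0 < P {ω | A ω = a}) (hp0 : 0 < P {ω | A ω = 0}) :
    ∀ t : ℝ, 0 < t →
      (1 / t) * sSup {s : ℝ | 0 ≤ s ∧
          (P[|{ω | A ω = a}]) {ω | t < T ω} ≤ (P[|{ω | A ω = 0}]) {ω | s < T ω}}
        = (1 / t) * sSup {s : ℝ | 0 ≤ s ∧ P {ω | t < Ta ω} ≤ P {ω | s < T0 ω}} := by
  have hindTa : ∀ s u : Set ℝ, MeasurableSet s → MeasurableSet u →
      P (A ⁻¹' s ∩ Ta ⁻¹' u) = P (A ⁻¹' s) * P (Ta ⁻¹' u) := by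
    intro s u hs hu
    have := hindep.measure_inter_preimage_eq_mul s (Set.univ ×ˢ u) hs
      (MeasurableSet.univ.prod hu)
    have hp : (fun ω => (T0 ω, Ta ω)) ⁻¹' (Set.univ ×ˢ u) = Ta ⁻¹' u := by
      ext ω; simp
    rwa [hp] at this
  have hindT0 : ∀ s u : Set ℝ, MeasurableSet s → MeasurableSet u →
      P (A ⁻¹' s ∩ T0 ⁻¹' u) = P (A ⁻¹' s) * P (T0 ⁻¹' u) := by
    intro s u hs hu
    have := hindep.measure_inter_preimage_eq_mul s (u ×ˢ Set.univ) hs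
      (hu.prod MeasurableSet.univ)
    have hp : (fun ω => (T0 ω, Ta ω)) ⁻¹' (u ×ˢ Set.univ) = T0 ⁻¹' u := by
      ext ω; simp
    rwa [hp] at this
  have ha := cond_eq_marginal P A T Ta a hA hTa hindTa hconsa hpa
  have h0 := cond_eq_marginal P A T T0 0 hA hT0 hindT0 hcons0 hp0
  intro t ht
  simp only [ha, h0]
end

section
/- Let T^0 be a strictly positive random variable whose survival function S_{T^0}(t) = P(T^0 > t) is continuous and strictly decreasing with S_{T^0}(0) = 1, S_{T^0}(t) > 0 for all t, and S_{T^0}(t) → 0 as t → ∞. Let g : [0,∞) → (0,∞) be locally integrable with Φ(t) := ∫_0^t g(s) ds → ∞, and define T^a := inf{t > 0 : Φ(t) ≥ T^0}. Then for every t > 0, (1/t)·sup{s ∈ [0,∞) : S_{T^0}(s) ≥ P(T^a > t)} = Φ(t)/t = (1/t)·∫_0^t g(s) ds. -/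
open MeasureTheory ProbabilityTheory Filter Set

/-- Equations (3)–(4) of the paper: for `Tᵃ := inf {s > 0 : Φ(s) ≥ T⁰}` with
`Φ(t) = ∫_0^t g(s) ds`, the conditional causal acceleration factor
`θ_c(t) = (1/t)·S_{T⁰}⁻¹(S_{Tᵃ}(t))` equals `Φ(t)/t = (1/t)∫_0^t g(s) ds`, and in particular
does not depend on the baseline (frailty) distribution of `T⁰`. -/
theorem conditional_acceleration_factor
    {Ω : Type*} [MeasurableSpace Ω] (P : Measure Ω) [IsProbabilityMeasure P]
    (T0 : Ω → ℝ) (hT0 : Measurable T0) (hT0pos : ∀ ω, 0 < T0 ω)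
    (S0 : ℝ → ℝ) (hS0 : ∀ t, S0 t = (P {ω | t < T0 ω}).toReal)
    (hcont : ContinuousOn S0 (Ici 0)) (hanti : StrictAntiOn S0 (Ici 0))
    (hS00 : S0 0 = 1) (hpos : ∀ t, 0 ≤ t → 0 < S0 t)
    (hlim : Tendsto S0 atTop (nhds 0))
    (g : ℝ → ℝ) (hg : Measurable g)
    (hgloc : LocallyIntegrable g)
    (hgpos : ∀ s, 0 ≤ s → 0 < g s)
    (Φ : ℝ → ℝ) (hΦ : ∀ t, Φ t = ∫ s in (0 : ℝ)..t, g s)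
    (hΦtop : Tendsto Φ atTop atTop)
    (Ta : Ω → ℝ) (hTa : ∀ ω, Ta ω = sInf {s : ℝ | 0 < s ∧ T0 ω ≤ Φ s}) :
    ∀ t : ℝ, 0 < t →
      (1 / t) * sSup {s : ℝ | 0 ≤ s ∧ (P {ω | t < Ta ω}).toReal ≤ S0 s} = Φ t / t ∧
      Φ t / t = (1 / t) * ∫ s in (0 : ℝ)..t, g s := by
  intro t ht
  have hint : ∀ a b : ℝ, IntervalIntegrable g volume a b := fun a b =>
    ⟨(hgloc.integrableOn_isCompact isCompact_Icc).mono_set Ioc_subset_Icc_self,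
     (hgloc.integrableOn_isCompact isCompact_Icc).mono_set Ioc_subset_Icc_self⟩
  have hΦ0 : Φ 0 = 0 := by simp [hΦ]
  have hΦcont : Continuous Φ := by
    have h := intervalIntegral.continuous_primitive hint 0
    have : Φ = fun b => ∫ x in (0:ℝ)..b, g x := funext hΦ
    rw [this]; exact h
  have hmono : StrictMonoOn Φ (Ici 0) := by
    intro a ha b hb hab
    have h1 : Φ b = Φ a + ∫ s in a..b, g s := by
      rw [hΦ, hΦ, intervalIntegral.integral_add_adjacent_intervals (hint 0 a) (hint a b)]
    have h2 : 0 < ∫ s in a..b, g s :=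
      intervalIntegral.intervalIntegral_pos_of_pos_on (hint a b)
        (fun x hx => hgpos x (le_of_lt (lt_of_le_of_lt ha hx.1))) hab
    linarith
  have hΦt_pos : 0 < Φ t := by
    have := hmono (self_mem_Ici) (le_of_lt ht) ht
    rwa [hΦ0] at this
  -- inverse of Φ
  have hinv : ∀ y : ℝ, 0 < y → ∃ c, 0 < c ∧ Φ c = y ∧
      {s : ℝ | 0 < s ∧ y ≤ Φ s} = Ici c := by
    intro y hy
    obtain ⟨M, hM1, hM2⟩ := ((hΦtop.eventually_ge_atTop y).and (eventually_ge_atTop (0:ℝ))).exists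
    have : y ∈ Icc (Φ 0) (Φ M) := ⟨by rw [hΦ0]; exact hy.le, hM1⟩
    obtain ⟨c, hcmem, hcy⟩ := intermediate_value_Icc hM2 hΦcont.continuousOn this
    have hc0 : 0 < c := by
      rcases lt_or_eq_of_le hcmem.1 with h | h
      · exact h
      · exfalso; rw [← h, hΦ0] at hcy; exact hy.ne hcy
    refine ⟨c, hc0, hcy, ?_⟩
    ext s
    simp only [mem_setOf_eq, mem_Ici]
    constructor
    · rintro ⟨hs, hys⟩
      exact (hmono.le_iff_le hcmem.1 hs.le).mp (hcy ▸ hys)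
    · intro hcs
      exact ⟨lt_of_lt_of_le hc0 hcs, hcy ▸ (hmono.le_iff_le hcmem.1 (hc0.le.trans hcs)).mpr hcs⟩
  -- the survival set of Ta
  have hset : {ω | t < Ta ω} = {ω | Φ t < T0 ω} := by
    ext ω
    obtain ⟨c, hc, hΦc, hB⟩ := hinv (T0 ω) (hT0pos ω)
    simp only [mem_setOf_eq, hTa, hB, csInf_Ici]
    rw [← hΦc]
    exact (hmono.lt_iff_lt ht.le hc.le).symm
  have hPval : (P {ω | t < Ta ω}).toReal = S0 (Φ t) := by
    rw [hset, hS0]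
  -- the set whose sup we take is Icc 0 (Φ t)
  have hsetA : {s : ℝ | 0 ≤ s ∧ (P {ω | t < Ta ω}).toReal ≤ S0 s} = Icc 0 (Φ t) := by
    ext s
    simp only [mem_setOf_eq, hPval, mem_Icc]
    constructor
    · rintro ⟨hs, hle⟩
      refine ⟨hs, ?_⟩
      by_contra h
      push_neg at h
      exact absurd hle (not_le.mpr (hanti hΦt_pos.le hs h))
    · rintro ⟨hs, hle⟩
      refine ⟨hs, ?_⟩
      rcases lt_or_eq_of_le hle with h | h
      · exact (hanti hs hΦt_pos.le h).le
      · rw [h]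
  rw [hsetA, csSup_Icc hΦt_pos.le]
  constructor
  · ring
  · rw [hΦ t]; ring
end

section
/- Let U_0 and U_1 be independent random variables each taking values in a countable set, and let T^0, T^a be nonnegative random variables. Fix t > 0 and a real c > 0 (the conditional causal acceleration factor at level u_1 of U_1 and time t). Suppose that for every u_0 with P(U_0 = u_0, U_1 = u_1) > 0: (i) P(T^a > t | U_0 = u_0, U_1 = u_1) = P(T^0 > c·t | U_0 = u_0), and (ii) P(T^0 > s | U_0 = u_0, U_1 = u_1) = P(T^0 > s | U_0 = u_0) for all s ≥ 0. Then P(T^a > t | U_1 = u_1) = P(T^0 > c·t). -/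
open MeasureTheory ProbabilityTheory Filter Set

/-- Marginalizing the frailty: if `U₀ ⫫ U₁` (countable-valued), and at heterogeneity level
`u₁` the conditional survival of `Tᵃ` at `t` equals that of `T⁰ | U₀ = u₀` at `c·t` for every
relevant `u₀` (with the conditional law of `T⁰` given `(U₀, U₁)` not depending on `U₁`), then
`P(Tᵃ > t | U₁ = u₁) = P(T⁰ > c·t)`. -/
theorem marginalize_frailty
    {Ω : Type*} [MeasurableSpace Ω] (P : Measure Ω) [IsProbabilityMeasure P]
    {γ0 γ1 : Type*} [MeasurableSpace γ0] [MeasurableSpace γ1]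
    [Countable γ0] [Countable γ1]
    [MeasurableSingletonClass γ0] [MeasurableSingletonClass γ1]
    (U0 : Ω → γ0) (U1 : Ω → γ1) (hU0 : Measurable U0) (hU1 : Measurable U1)
    (hindep : IndepFun U0 U1 P)
    (T0 Ta : Ω → ℝ) (hT0 : Measurable T0) (hTa : Measurable Ta)
    (hT0nn : ∀ ω, 0 ≤ T0 ω) (hTann : ∀ ω, 0 ≤ Ta ω)
    (t : ℝ) (ht : 0 < t) (c : ℝ) (hc : 0 < c)
    (u1 : γ1) (hu1 : 0 < P {ω | U1 ω = u1})
    (h1 : ∀ u0 : γ0, 0 < P {ω | U0 ω = u0 ∧ U1 ω = u1} →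
      (P[|{ω | U0 ω = u0 ∧ U1 ω = u1}]) {ω | t < Ta ω}
        = (P[|{ω | U0 ω = u0}]) {ω | c * t < T0 ω})
    (h2 : ∀ u0 : γ0, 0 < P {ω | U0 ω = u0 ∧ U1 ω = u1} →
      ∀ s : ℝ, 0 ≤ s →
        (P[|{ω | U0 ω = u0 ∧ U1 ω = u1}]) {ω | s < T0 ω}
          = (P[|{ω | U0 ω = u0}]) {ω | s < T0 ω}) :
    (P[|{ω | U1 ω = u1}]) {ω | t < Ta ω} = P {ω | c * t < T0 ω} := by
  classical
  have hA : MeasurableSet {ω | U1 ω = u1} := hU1 (measurableSet_singleton u1)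
  have hAne : P {ω | U1 ω = u1} ≠ 0 := hu1.ne'
  have hAfin : P {ω | U1 ω = u1} ≠ ⊤ := measure_ne_top P _
  have hX : MeasurableSet {ω | t < Ta ω} := measurableSet_lt measurable_const hTa
  have hY : MeasurableSet {ω | c * t < T0 ω} := measurableSet_lt measurable_const hT0
  -- partition lemma
  have hpart : ∀ (B : Set Ω), MeasurableSet B →
      P B = ∑' u0 : γ0, P ({ω | U0 ω = u0} ∩ B) := by
    intro B hB
    have hUnion : B = ⋃ u0 : γ0, ({ω | U0 ω = u0} ∩ B) := by
      ext ω; simp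
    have hdisj : Pairwise (Function.onFun Disjoint
        (fun u0 : γ0 => ({ω | U0 ω = u0} ∩ B))) := by
      intro i j hij
      refine Disjoint.mono inf_le_left inf_le_left ?_
      rw [Set.disjoint_left]
      rintro ω (rfl : U0 ω = i) (h2 : U0 ω = j)
      exact hij h2
    conv_lhs => rw [hUnion]
    exact measure_iUnion hdisj fun u0 =>
      (hU0 (measurableSet_singleton u0)).inter hB
  -- key term identity
  have key : ∀ u0 : γ0,
      P ({ω | U0 ω = u0} ∩ ({ω | U1 ω = u1} ∩ {ω | t < Ta ω}))
        = P {ω | U1 ω = u1} * P ({ω | U0 ω = u0} ∩ {ω | c * t < T0 ω}) := by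
    intro u0
    have hB : MeasurableSet {ω | U0 ω = u0} := hU0 (measurableSet_singleton u0)
    have hSeq : {ω | U0 ω = u0 ∧ U1 ω = u1}
        = {ω | U0 ω = u0} ∩ {ω | U1 ω = u1} := rfl
    have hmul : P ({ω | U0 ω = u0} ∩ {ω | U1 ω = u1})
        = P {ω | U0 ω = u0} * P {ω | U1 ω = u1} :=
      hindep.measure_inter_preimage_eq_mul _ _
        (measurableSet_singleton u0) (measurableSet_singleton u1)
    by_cases h0 : P ({ω | U0 ω = u0} ∩ {ω | U1 ω = u1}) = 0
    · have hu0 : P {ω | U0 ω = u0} = 0 := by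
        rw [hmul] at h0
        rcases mul_eq_zero.mp h0 with h | h
        · exact h
        · exact absurd h hAne
      have hz1 : P ({ω | U0 ω = u0} ∩ ({ω | U1 ω = u1} ∩ {ω | t < Ta ω})) = 0 :=
        measure_mono_null Set.inter_subset_left hu0
      have hz2 : P ({ω | U0 ω = u0} ∩ {ω | c * t < T0 ω}) = 0 :=
        measure_mono_null Set.inter_subset_left hu0
      rw [hz1, hz2, mul_zero]
    · have hBne : P {ω | U0 ω = u0} ≠ 0 := by
        intro h
        exact h0 (measure_mono_null Set.inter_subset_left h)
      have hBfin : P {ω | U0 ω = u0} ≠ ⊤ := measure_ne_top P _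
      have hSne : P {ω | U0 ω = u0 ∧ U1 ω = u1} ≠ 0 := by rw [hSeq]; exact h0
      have hSfin : P {ω | U0 ω = u0 ∧ U1 ω = u1} ≠ ⊤ := measure_ne_top P _
      have hpos : 0 < P {ω | U0 ω = u0 ∧ U1 ω = u1} := pos_iff_ne_zero.mpr hSne
      have hSmeas : MeasurableSet {ω | U0 ω = u0 ∧ U1 ω = u1} := by
        rw [hSeq]; exact hB.inter hA
      have h1' := h1 u0 hpos
      rw [cond_apply hSmeas, cond_apply hB] at h1'
      have : P ({ω | U0 ω = u0 ∧ U1 ω = u1} ∩ {ω | t < Ta ω})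
          = P {ω | U0 ω = u0 ∧ U1 ω = u1} *
            ((P {ω | U0 ω = u0})⁻¹ * P ({ω | U0 ω = u0} ∩ {ω | c * t < T0 ω})) := by
        rw [← h1', ← mul_assoc, ENNReal.mul_inv_cancel hSne hSfin, one_mul]
      rw [hSeq, Set.inter_assoc] at this
      rw [this, hmul, mul_comm (P {ω | U0 ω = u0}) (P {ω | U1 ω = u1}),
        mul_assoc, ← mul_assoc (P {ω | U0 ω = u0}),
        ENNReal.mul_inv_cancel hBne hBfin, one_mul]
  rw [cond_apply hA]
  rw [hpart ({ω | U1 ω = u1} ∩ {ω | t < Ta ω}) (hA.inter hX)]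
  have : ∑' u0 : γ0, P ({ω | U0 ω = u0} ∩ ({ω | U1 ω = u1} ∩ {ω | t < Ta ω}))
      = P {ω | U1 ω = u1} * ∑' u0 : γ0, P ({ω | U0 ω = u0} ∩ {ω | c * t < T0 ω}) := by
    rw [← ENNReal.tsum_mul_left]
    exact tsum_congr key
  rw [this, ← hpart _ hY, ← mul_assoc, ENNReal.inv_mul_cancel hAne hAfin, one_mul]
end

section
/- Let T^0 and T^a be strictly positive random variables such that S_{T^0}(t) = P(T^0 > t) is continuous and strictly decreasing with S_{T^0}(0) = 1, S_{T^0}(t) > 0 and S_{T^0}(t) → 0 as t → ∞, and assume S_{T^a}(t) > 0 for all t > 0. Define θ(t) = (1/t)·sup{s : S_{T^0}(s) ≥ S_{T^a}(t)}. If log T^0 and log T^a are integrable, then E[log T^a] − E[log T^0] = ∫_0^∞ log t dG(t) − ∫_0^∞ log t dF_{T^0}(t), where G is the cumulative distribution function t ↦ F_{T^0}(t·θ(t)) (which is the CDF of T^a) and the integrals are Lebesgue–Stieltjes integrals. -/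
open MeasureTheory ProbabilityTheory Filter Set

/-- Equation (8) of Lemma 1 in the paper: with `θ(t) = (1/t)·S_{T⁰}⁻¹(S_{Tᵃ}(t))`, the contrast
of expected log survival times equals the difference of Lebesgue–Stieltjes integrals of `log`
with respect to `G(t) = F_{T⁰}(t·θ(t))` (which is the CDF of `Tᵃ`) and `F_{T⁰}`. -/
theorem log_contrast_identification
    {Ω : Type*} [MeasurableSpace Ω] (P : Measure Ω) [IsProbabilityMeasure P]
    (T0 Ta : Ω → ℝ) (hT0 : Measurable T0) (hTa : Measurable Ta)
    (hT0pos : ∀ ω, 0 < T0 ω) (hTapos : ∀ ω, 0 < Ta ω)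
    (S0 Sa : ℝ → ℝ)
    (hS0 : ∀ t, S0 t = (P {ω | t < T0 ω}).toReal)
    (hSa : ∀ t, Sa t = (P {ω | t < Ta ω}).toReal)
    (hcont : ContinuousOn S0 (Ici 0)) (hanti : StrictAntiOn S0 (Ici 0))
    (hS00 : S0 0 = 1) (hpos : ∀ t, 0 ≤ t → 0 < S0 t)
    (hlim : Tendsto S0 atTop (nhds 0))
    (hSapos : ∀ t, 0 < t → 0 < Sa t)
    (θ : ℝ → ℝ)
    (hθ : ∀ t, 0 < t → θ t = (1 / t) * sSup {s : ℝ | 0 ≤ s ∧ Sa t ≤ S0 s})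
    (hint0 : Integrable (fun ω => Real.log (T0 ω)) P)
    (hinta : Integrable (fun ω => Real.log (Ta ω)) P)
    (G F0 : StieltjesFunction ℝ)
    (hF0 : ∀ t, F0 t = (P {ω | T0 ω ≤ t}).toReal)
    (hG : ∀ t, 0 < t → G t = F0 (t * θ t))
    (hGneg : ∀ t, t ≤ 0 → G t = 0) :
    (∀ t, G t = (P {ω | Ta ω ≤ t}).toReal) ∧
    (∫ ω, Real.log (Ta ω) ∂P) - (∫ ω, Real.log (T0 ω) ∂P)
      = (∫ x in Ioi (0 : ℝ), Real.log x ∂G.measure)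
        - (∫ x in Ioi (0 : ℝ), Real.log x ∂F0.measure) := by

  -- Complement identity: for measurable A, (P Aᶜ).toReal = 1 - (P A).toReal
  have hcompl : ∀ (f : Ω → ℝ) (_ : Measurable f) (t : ℝ),
      (P {ω | t < f ω}).toReal = 1 - (P {ω | f ω ≤ t}).toReal := by
    intro f hf t
    have hA : MeasurableSet {ω | f ω ≤ t} := hf measurableSet_Iic
    have : {ω | t < f ω} = {ω | f ω ≤ t}ᶜ := by ext ω; simp [not_le]
    rw [this, measure_compl hA (measure_ne_top P _)]
    rw [ENNReal.toReal_sub_of_le (measure_mono (subset_univ _)) (measure_ne_top P _),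
      measure_univ, ENNReal.toReal_one]
  -- Part 1
  have hmain : ∀ t, G t = (P {ω | Ta ω ≤ t}).toReal := by
    intro t
    rcases le_or_gt t 0 with ht | ht
    · have : {ω | Ta ω ≤ t} = ∅ := by
        ext ω; simp only [mem_setOf_eq, mem_empty_iff_false, iff_false, not_le]
        exact lt_of_le_of_lt ht (hTapos ω)
      rw [hGneg t ht, this, measure_empty, ENNReal.toReal_zero]
    · -- t > 0
      set c := Sa t with hc
      have hc0 : 0 < c := hSapos t ht
      have hc1 : c ≤ 1 := by
        rw [hc, hSa]
        have := ENNReal.toReal_mono (measure_ne_top P univ)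
          (measure_mono (subset_univ {ω | t < Ta ω}))
        simpa [measure_univ] using this
      -- find M with S0 M < c, M ≥ 0
      obtain ⟨M0, hM0⟩ := (hlim.eventually (Iio_mem_nhds hc0)).exists_forall_of_atTop
      set M := max M0 0 with hM
      have hMnn : (0:ℝ) ≤ M := le_max_right _ _
      have hSM : S0 M < c := hM0 M (le_max_left _ _)
      -- IVT: get s* with S0 s* = c
      have hsub : Icc (0:ℝ) M ⊆ Ici 0 := fun x hx => hx.1
      have hIVT := intermediate_value_Icc' hMnn (hcont.mono hsub)
      have hcmem : c ∈ Icc (S0 M) (S0 0) := ⟨hSM.le, by rw [hS00]; exact hc1⟩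
      obtain ⟨s, hsmem, hs⟩ := hIVT hcmem
      have hs0 : 0 ≤ s := hsmem.1
      -- the set equals Icc 0 s
      have hset : {x : ℝ | 0 ≤ x ∧ Sa t ≤ S0 x} = Icc 0 s := by
        ext x
        simp only [mem_setOf_eq, mem_Icc, ← hc]
        constructor
        · rintro ⟨hx0, hxc⟩
          refine ⟨hx0, ?_⟩
          by_contra h
          push_neg at h
          exact absurd (hanti hs0 hx0 h) (by rw [hs]; exact not_lt.2 hxc)
        · rintro ⟨hx0, hxs⟩
          refine ⟨hx0, ?_⟩
          rw [← hs]
          rcases eq_or_lt_of_le hxs with rfl | h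
          · exact le_rfl
          · exact (hanti hx0 hs0 h).le
      have hθt : t * θ t = s := by
        rw [hθ t ht, hset, csSup_Icc hs0]
        field_simp
      rw [hG t ht, hθt, hF0]
      have h1 : (P {ω | T0 ω ≤ s}).toReal = 1 - S0 s := by
        rw [hS0 s] at *
        have := hcompl T0 hT0 s
        linarith [hcompl T0 hT0 s]
      have h2 : (P {ω | Ta ω ≤ t}).toReal = 1 - Sa t := by
        have := hcompl Ta hTa t
        rw [hSa] at *
        linarith [hcompl Ta hTa t]
      rw [h1, h2, hs, hc]
  refine ⟨hmain, ?_⟩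
  -- Part 2
  have hmapa : ∀ t, (P.map Ta) (Iic t) = P {ω | Ta ω ≤ t} := by
    intro t
    rw [Measure.map_apply hTa measurableSet_Iic]
    rfl
  have hmap0 : ∀ t, (P.map T0) (Iic t) = P {ω | T0 ω ≤ t} := by
    intro t
    rw [Measure.map_apply hT0 measurableSet_Iic]
    rfl
  have hpa : IsProbabilityMeasure (P.map Ta) := Measure.isProbabilityMeasure_map hTa.aemeasurable
  have hp0 : IsProbabilityMeasure (P.map T0) := Measure.isProbabilityMeasure_map hT0.aemeasurable
  have hGm : G.measure = P.map Ta := by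
    have : G = cdf (P.map Ta) := by
      ext t
      rw [cdf_eq_real, measureReal_def, hmapa, hmain]
    rw [this, measure_cdf]
  have hF0m : F0.measure = P.map T0 := by
    have : F0 = cdf (P.map T0) := by
      ext t
      rw [cdf_eq_real, measureReal_def, hmap0, hF0]
    rw [this, measure_cdf]
  have hresta : (P.map Ta).restrict (Ioi 0) = P.map Ta := by
    apply Measure.restrict_eq_self_of_ae_mem
    rw [ae_iff]
    have : {x : ℝ | x ∉ Ioi (0:ℝ)} = Iic 0 := by ext x; simp [not_lt]
    rw [this, hmapa]
    have : {ω | Ta ω ≤ (0:ℝ)} = ∅ := by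
      ext ω; simp only [mem_setOf_eq, mem_empty_iff_false, iff_false, not_le]; exact hTapos ω
    rw [this, measure_empty]
  have hrest0 : (P.map T0).restrict (Ioi 0) = P.map T0 := by
    apply Measure.restrict_eq_self_of_ae_mem
    rw [ae_iff]
    have : {x : ℝ | x ∉ Ioi (0:ℝ)} = Iic 0 := by ext x; simp [not_lt]
    rw [this, hmap0]
    have : {ω | T0 ω ≤ (0:ℝ)} = ∅ := by
      ext ω; simp only [mem_setOf_eq, mem_empty_iff_false, iff_false, not_le]; exact hT0pos ω
    rw [this, measure_empty]
  have hia : ∫ x in Ioi (0:ℝ), Real.log x ∂G.measure = ∫ ω, Real.log (Ta ω) ∂P := by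
    rw [hGm, hresta, integral_map hTa.aemeasurable Real.measurable_log.aestronglyMeasurable]
  have hi0 : ∫ x in Ioi (0:ℝ), Real.log x ∂F0.measure = ∫ ω, Real.log (T0 ω) ∂P := by
    rw [hF0m, hrest0, integral_map hT0.aemeasurable Real.measurable_log.aestronglyMeasurable]
  rw [hia, hi0]
end

section
/- Let T^0 and T^a be nonnegative random variables such that S_{T^0}(t) = P(T^0 > t) is continuous and strictly decreasing with S_{T^0}(0) = 1, S_{T^0}(t) > 0 and S_{T^0}(t) → 0 as t → ∞, and assume S_{T^a}(t) > 0 for all t > 0. Define θ(t) = (1/t)·sup{s : S_{T^0}(s) ≥ S_{T^a}(t)}. Then E[T^a] = ∫_0^∞ S_{T^0}(t·θ(t)) dt (both sides possibly infinite); consequently, if 0 < E[T^0] < ∞ and E[T^a] < ∞, then E[T^a]/E[T^0] = (∫_0^∞ S_{T^0}(t·θ(t)) dt) / (∫_0^∞ S_{T^0}(t) dt). -/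
open MeasureTheory ProbabilityTheory Filter Set

lemma sSup_survival_eq {S0 : ℝ → ℝ} (hcont : ContinuousOn S0 (Ici 0))
    (hanti : StrictAntiOn S0 (Ici 0)) (hS00 : S0 0 = 1)
    (hlim : Tendsto S0 atTop (nhds 0)) {p : ℝ} (hp0 : 0 < p) (hp1 : p ≤ 1) :
    S0 (sSup {s : ℝ | 0 ≤ s ∧ p ≤ S0 s}) = p := by
  obtain ⟨M, hM0, hMp⟩ : ∃ M, 0 ≤ M ∧ S0 M < p := by
    have h1 : ∀ᶠ x in atTop, S0 x < p := hlim.eventually_lt_const hp0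
    obtain ⟨M, hM⟩ := ((eventually_ge_atTop (0:ℝ)).and h1).exists
    exact ⟨M, hM.1, hM.2⟩
  have hIcc : ContinuousOn S0 (Icc 0 M) := hcont.mono (Icc_subset_Ici_self)
  have : p ∈ Icc (S0 M) (S0 0) := ⟨le_of_lt hMp, by rw [hS00]; exact hp1⟩
  obtain ⟨s, hsmem, hsval⟩ := intermediate_value_Icc' hM0 hIcc this
  have hgreat : IsGreatest {s : ℝ | 0 ≤ s ∧ p ≤ S0 s} s := by
    constructor
    · exact ⟨hsmem.1, hsval.ge⟩
    · intro x hx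
      by_contra hlt
      push_neg at hlt
      have := hanti hsmem.1 (le_trans hsmem.1 hlt.le) hlt
      rw [hsval] at this
      exact absurd hx.2 (not_le.2 this)
  rw [hgreat.csSup_eq, hsval]

/-- Equation (9) of Lemma 1 in the paper: with `θ(t) = (1/t)·S_{T⁰}⁻¹(S_{Tᵃ}(t))`, one has
`E[Tᵃ] = ∫_0^∞ S_{T⁰}(t·θ(t)) dt` (possibly infinite); consequently, when `0 < E[T⁰] < ∞`
and `E[Tᵃ] < ∞`, the ratio of expected survival times is
`E[Tᵃ]/E[T⁰] = (∫_0^∞ S_{T⁰}(t·θ(t)) dt)/(∫_0^∞ S_{T⁰}(t) dt)`. -/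
theorem mean_ratio_identification
    {Ω : Type*} [MeasurableSpace Ω] (P : Measure Ω) [IsProbabilityMeasure P]
    (T0 Ta : Ω → ℝ) (hT0 : Measurable T0) (hTa : Measurable Ta)
    (hT0nn : ∀ ω, 0 ≤ T0 ω) (hTann : ∀ ω, 0 ≤ Ta ω)
    (S0 Sa : ℝ → ℝ)
    (hS0 : ∀ t, S0 t = (P {ω | t < T0 ω}).toReal)
    (hSa : ∀ t, Sa t = (P {ω | t < Ta ω}).toReal)
    (hcont : ContinuousOn S0 (Ici 0)) (hanti : StrictAntiOn S0 (Ici 0))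
    (hS00 : S0 0 = 1) (hpos : ∀ t, 0 ≤ t → 0 < S0 t)
    (hlim : Tendsto S0 atTop (nhds 0))
    (hSapos : ∀ t, 0 < t → 0 < Sa t)
    (θ : ℝ → ℝ)
    (hθ : ∀ t, 0 < t → θ t = (1 / t) * sSup {s : ℝ | 0 ≤ s ∧ Sa t ≤ S0 s}) :
    (∫⁻ ω, ENNReal.ofReal (Ta ω) ∂P)
      = (∫⁻ t in Ioi (0 : ℝ), ENNReal.ofReal (S0 (t * θ t))) ∧
    (0 < (∫⁻ ω, ENNReal.ofReal (T0 ω) ∂P) →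
      (∫⁻ ω, ENNReal.ofReal (T0 ω) ∂P) < ⊤ →
      (∫⁻ ω, ENNReal.ofReal (Ta ω) ∂P) < ⊤ →
      (∫⁻ ω, ENNReal.ofReal (Ta ω) ∂P).toReal / (∫⁻ ω, ENNReal.ofReal (T0 ω) ∂P).toReal
        = (∫⁻ t in Ioi (0 : ℝ), ENNReal.ofReal (S0 (t * θ t))).toReal
          / (∫⁻ t in Ioi (0 : ℝ), ENNReal.ofReal (S0 t)).toReal) := by
  have key : ∀ t ∈ Ioi (0:ℝ), ENNReal.ofReal (S0 (t * θ t)) = P {ω | t < Ta ω} := by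
    intro t ht
    have ht' : (0:ℝ) < t := ht
    have htθ : t * θ t = sSup {s : ℝ | 0 ≤ s ∧ Sa t ≤ S0 s} := by
      rw [hθ t ht']; field_simp
    have hSa1 : Sa t ≤ 1 := by
      rw [hSa]
      have := prob_le_one (μ := P) (s := {ω | t < Ta ω})
      simpa using ENNReal.toReal_mono ENNReal.one_ne_top this
    have := sSup_survival_eq hcont hanti hS00 hlim (hSapos t ht') hSa1
    rw [htθ, this, hSa, ENNReal.ofReal_toReal (measure_ne_top P _)]
  have keyA : (∫⁻ t in Ioi (0:ℝ), ENNReal.ofReal (S0 (t * θ t)))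
      = ∫⁻ ω, ENNReal.ofReal (Ta ω) ∂P := by
    rw [lintegral_eq_lintegral_meas_lt P (Eventually.of_forall hTann) hTa.aemeasurable]
    exact setLIntegral_congr_fun measurableSet_Ioi key
  have key0 : (∫⁻ t in Ioi (0:ℝ), ENNReal.ofReal (S0 t))
      = ∫⁻ ω, ENNReal.ofReal (T0 ω) ∂P := by
    rw [lintegral_eq_lintegral_meas_lt P (Eventually.of_forall hT0nn) hT0.aemeasurable]
    refine setLIntegral_congr_fun measurableSet_Ioi (fun t ht => ?_)
    rw [hS0, ENNReal.ofReal_toReal (measure_ne_top P _)]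
  refine ⟨keyA.symm, fun _ _ _ => ?_⟩
  rw [keyA, key0]
end

section
/- Let (Ω, ℱ, P) carry a treatment A with levels 0 and a, a covariate L taking values in a countable set, nonnegative potential outcomes T^0, T^a, and a factual outcome T with T = T^a on {A = a} and T = T^0 on {A = 0} (consistency). Fix ℓ with P(L = ℓ, A = a) > 0 and P(L = ℓ, A = 0) > 0, and assume conditional exchangeability given L: for every t ≥ 0 and b ∈ {0, a}, P(T^b > t | L = ℓ, A = b) = P(T^b > t | L = ℓ). Then for every t ≥ 0 and b ∈ {0, a}, P(T > t | L = ℓ, A = b) = P(T^b > t | L = ℓ); consequently, for every t > 0, (1/t)·sup{s : P(T > s | L = ℓ, A = 0) ≥ P(T > t | L = ℓ, A = a)} = (1/t)·sup{s : P(T^0 > s | L = ℓ) ≥ P(T^a > t | L = ℓ)}, i.e., the conditional observed acceleration factor equals the conditional causal acceleration factor given L = ℓ. -/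
open MeasureTheory ProbabilityTheory Filter Set

/-- Section 4 extension of Theorem 1 to observational data: under consistency and conditional
exchangeability given a measured covariate `L`, the conditional observational survival
functions identify the conditional potential-outcome survival functions, and hence the
conditional observed acceleration factor equals the conditional causal acceleration factor
given `L = ℓ`. -/
theorem conditional_acceleration_factor_identification
    {Ω : Type*} [MeasurableSpace Ω] (P : Measure Ω) [IsProbabilityMeasure P]
    {γ : Type*} [MeasurableSpace γ] [Countable γ] [MeasurableSingletonClass γ]
    (A T T0 Ta : Ω → ℝ) (L : Ω → γ) (a : ℝ)
    (hA : Measurable A) (hT : Measurable T) (hT0 : Measurable T0) (hTa : Measurable Ta)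
    (hL : Measurable L)
    (hT0nn : ∀ ω, 0 ≤ T0 ω) (hTann : ∀ ω, 0 ≤ Ta ω)
    (hconsa : ∀ ω, A ω = a → T ω = Ta ω)
    (hcons0 : ∀ ω, A ω = 0 → T ω = T0 ω)
    (ℓ : γ)
    (hpa : 0 < P {ω | L ω = ℓ ∧ A ω = a}) (hp0 : 0 < P {ω | L ω = ℓ ∧ A ω = 0})
    (hexcha : ∀ t : ℝ, 0 ≤ t →
      (P[|{ω | L ω = ℓ ∧ A ω = a}]) {ω | t < Ta ω} = (P[|{ω | L ω = ℓ}]) {ω | t < Ta ω})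
    (hexch0 : ∀ t : ℝ, 0 ≤ t →
      (P[|{ω | L ω = ℓ ∧ A ω = 0}]) {ω | t < T0 ω} = (P[|{ω | L ω = ℓ}]) {ω | t < T0 ω}) :
    (∀ t : ℝ, 0 ≤ t →
      (P[|{ω | L ω = ℓ ∧ A ω = a}]) {ω | t < T ω} = (P[|{ω | L ω = ℓ}]) {ω | t < Ta ω} ∧
      (P[|{ω | L ω = ℓ ∧ A ω = 0}]) {ω | t < T ω} = (P[|{ω | L ω = ℓ}]) {ω | t < T0 ω}) ∧
    (∀ t : ℝ, 0 < t →
      (1 / t) * sSup {s : ℝ | 0 ≤ s ∧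
          (P[|{ω | L ω = ℓ ∧ A ω = a}]) {ω | t < T ω}
            ≤ (P[|{ω | L ω = ℓ ∧ A ω = 0}]) {ω | s < T ω}}
        = (1 / t) * sSup {s : ℝ | 0 ≤ s ∧
            (P[|{ω | L ω = ℓ}]) {ω | t < Ta ω} ≤ (P[|{ω | L ω = ℓ}]) {ω | s < T0 ω}}) := by

  have hSa : MeasurableSet {ω | L ω = ℓ ∧ A ω = a} :=
    (hL (measurableSet_singleton ℓ)).inter (hA (measurableSet_singleton a))
  have hS0 : MeasurableSet {ω | L ω = ℓ ∧ A ω = 0} :=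
    (hL (measurableSet_singleton ℓ)).inter (hA (measurableSet_singleton (0:ℝ)))
  have keya : ∀ t : ℝ, (P[|{ω | L ω = ℓ ∧ A ω = a}]) {ω | t < T ω}
      = (P[|{ω | L ω = ℓ ∧ A ω = a}]) {ω | t < Ta ω} := by
    intro t
    rw [ProbabilityTheory.cond_apply hSa, ProbabilityTheory.cond_apply hSa]
    congr 2
    ext ω
    simp only [Set.mem_inter_iff, Set.mem_setOf_eq]
    constructor
    · rintro ⟨⟨h1, h2⟩, h3⟩; exact ⟨⟨h1, h2⟩, by rwa [← hconsa ω h2]⟩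
    · rintro ⟨⟨h1, h2⟩, h3⟩; exact ⟨⟨h1, h2⟩, by rwa [hconsa ω h2]⟩
  have key0 : ∀ t : ℝ, (P[|{ω | L ω = ℓ ∧ A ω = 0}]) {ω | t < T ω}
      = (P[|{ω | L ω = ℓ ∧ A ω = 0}]) {ω | t < T0 ω} := by
    intro t
    rw [ProbabilityTheory.cond_apply hS0, ProbabilityTheory.cond_apply hS0]
    congr 2
    ext ω
    simp only [Set.mem_inter_iff, Set.mem_setOf_eq]
    constructor
    · rintro ⟨⟨h1, h2⟩, h3⟩; exact ⟨⟨h1, h2⟩, by rwa [← hcons0 ω h2]⟩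
    · rintro ⟨⟨h1, h2⟩, h3⟩; exact ⟨⟨h1, h2⟩, by rwa [hcons0 ω h2]⟩
  have main : ∀ t : ℝ, 0 ≤ t →
      (P[|{ω | L ω = ℓ ∧ A ω = a}]) {ω | t < T ω} = (P[|{ω | L ω = ℓ}]) {ω | t < Ta ω} ∧
      (P[|{ω | L ω = ℓ ∧ A ω = 0}]) {ω | t < T ω} = (P[|{ω | L ω = ℓ}]) {ω | t < T0 ω} := by
    intro t ht
    exact ⟨(keya t).trans (hexcha t ht), (key0 t).trans (hexch0 t ht)⟩
  refine ⟨main, fun t ht => ?_⟩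
  congr 1
  apply congrArg
  ext s
  simp only [Set.mem_setOf_eq]
  constructor
  · rintro ⟨hs, h⟩
    exact ⟨hs, by rw [← (main t ht.le).1, ← (main s hs).2]; exact h⟩
  · rintro ⟨hs, h⟩
    exact ⟨hs, by rw [(main t ht.le).1, (main s hs).2]; exact h⟩
end

section
/- Let (Ω, ℱ, P) carry a treatment A with levels 0 and a, a covariate L taking values in a countable set, nonnegative potential outcomes T^0, T^a, and a factual outcome T with T = T^a on {A = a} and T = T^0 on {A = 0} (consistency). Assume that for every ℓ in the support of L, P(L = ℓ, A = a) > 0, P(L = ℓ, A = 0) > 0, and conditional exchangeability holds: P(T^b > t | L = ℓ, A = b) = P(T^b > t | L = ℓ) for all t ≥ 0 and b ∈ {0, a}. Define the adjusted survival functions S_{b,adj}(t) := Σ_ℓ P(T > t | L = ℓ, A = b)·P(L = ℓ). Then S_{b,adj}(t) = P(T^b > t) for all t ≥ 0 and b ∈ {0, a}; consequently the adjusted acceleration factor θ_adj(t) = (1/t)·sup{s : S_{0,adj}(s) ≥ S_{a,adj}(t)} equals the causal acceleration factor θ(t) = (1/t)·sup{s : P(T^0 > s) ≥ P(T^a > t)}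 for all t > 0. -/
open MeasureTheory ProbabilityTheory Filter Set

private lemma standardize_aux
    {Ω : Type*} [MeasurableSpace Ω] (P : Measure Ω) [IsProbabilityMeasure P]
    {γ : Type*} [MeasurableSpace γ] [Countable γ] [MeasurableSingletonClass γ]
    (A T Tb : Ω → ℝ) (L : Ω → γ) (b : ℝ)
    (hA : Measurable A) (hTb : Measurable Tb) (hL : Measurable L)
    (hcons : ∀ ω, A ω = b → T ω = Tb ω) (t : ℝ)
    (hexch : ∀ ℓ : γ, 0 < P {ω | L ω = ℓ} →
      (P[|{ω | L ω = ℓ ∧ A ω = b}]) {ω | t < Tb ω} = (P[|{ω | L ω = ℓ}]) {ω | t < Tb ω}) :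
    (∑' ℓ : γ, (P[|{ω | L ω = ℓ ∧ A ω = b}]) {ω | t < T ω} * P {ω | L ω = ℓ})
      = P {ω | t < Tb ω} := by
  have hmL : ∀ ℓ : γ, MeasurableSet {ω | L ω = ℓ} := fun ℓ => hL (measurableSet_singleton ℓ)
  have key : ∀ ℓ : γ, (P[|{ω | L ω = ℓ ∧ A ω = b}]) {ω | t < T ω} * P {ω | L ω = ℓ}
      = P ({ω | L ω = ℓ} ∩ {ω | t < Tb ω}) := by
    intro ℓ
    by_cases h : P {ω | L ω = ℓ} = 0
    · rw [h, mul_zero, measure_mono_null Set.inter_subset_left h]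
    · have hms : MeasurableSet {ω | L ω = ℓ ∧ A ω = b} :=
        (hmL ℓ).inter (hA (measurableSet_singleton b))
      have hset : {ω | L ω = ℓ ∧ A ω = b} ∩ {ω | t < T ω}
          = {ω | L ω = ℓ ∧ A ω = b} ∩ {ω | t < Tb ω} := by
        ext ω
        simp only [Set.mem_inter_iff, Set.mem_setOf_eq, and_congr_right_iff]
        rintro ⟨-, hω⟩
        rw [hcons ω hω]
      have h1 : (P[|{ω | L ω = ℓ ∧ A ω = b}]) {ω | t < T ω}
          = (P[|{ω | L ω = ℓ ∧ A ω = b}]) {ω | t < Tb ω} := by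
        rw [cond_apply hms, cond_apply hms, hset]
      rw [h1, hexch ℓ (pos_iff_ne_zero.mpr h), cond_apply (hmL ℓ), mul_comm, ← mul_assoc,
        ENNReal.mul_inv_cancel h (measure_ne_top _ _), one_mul]
  simp_rw [key]
  rw [← measure_iUnion (fun i j hij => by
        simp only [Function.onFun, Set.disjoint_left]
        rintro ω ⟨hi, -⟩ ⟨hj, -⟩
        exact hij (hi.symm.trans hj))
      (fun ℓ => (hmL ℓ).inter (measurableSet_lt measurable_const hTb))]
  congr 1
  ext ω
  simp

/-- Section 4 standardization claim: under consistency, positivity and conditional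
exchangeability on the support of a countable measured covariate `L`, the adjusted
(standardized) survival functions `S_{b,adj}(t) = Σ_ℓ P(T > t | L = ℓ, A = b)·P(L = ℓ)` equal
the potential-outcome survival functions, and consequently the adjusted acceleration factor
`θ_adj` equals the causal acceleration factor `θ`. -/
theorem standardized_acceleration_factor
    {Ω : Type*} [MeasurableSpace Ω] (P : Measure Ω) [IsProbabilityMeasure P]
    {γ : Type*} [MeasurableSpace γ] [Countable γ] [MeasurableSingletonClass γ]
    (A T T0 Ta : Ω → ℝ) (L : Ω → γ) (a : ℝ)
    (hA : Measurable A) (hT : Measurable T) (hT0 : Measurable T0) (hTa : Measurable Ta)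
    (hL : Measurable L)
    (hT0nn : ∀ ω, 0 ≤ T0 ω) (hTann : ∀ ω, 0 ≤ Ta ω)
    (hconsa : ∀ ω, A ω = a → T ω = Ta ω)
    (hcons0 : ∀ ω, A ω = 0 → T ω = T0 ω)
    (hsupp : ∀ ℓ : γ, 0 < P {ω | L ω = ℓ} →
      0 < P {ω | L ω = ℓ ∧ A ω = a} ∧ 0 < P {ω | L ω = ℓ ∧ A ω = 0} ∧
      (∀ t : ℝ, 0 ≤ t →
        (P[|{ω | L ω = ℓ ∧ A ω = a}]) {ω | t < Ta ω}
          = (P[|{ω | L ω = ℓ}]) {ω | t < Ta ω} ∧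
        (P[|{ω | L ω = ℓ ∧ A ω = 0}]) {ω | t < T0 ω}
          = (P[|{ω | L ω = ℓ}]) {ω | t < T0 ω})) :
    (∀ t : ℝ, 0 ≤ t →
      (∑' ℓ : γ, (P[|{ω | L ω = ℓ ∧ A ω = a}]) {ω | t < T ω} * P {ω | L ω = ℓ})
        = P {ω | t < Ta ω} ∧
      (∑' ℓ : γ, (P[|{ω | L ω = ℓ ∧ A ω = 0}]) {ω | t < T ω} * P {ω | L ω = ℓ})
        = P {ω | t < T0 ω}) ∧
    (∀ t : ℝ, 0 < t →
      (1 / t) * sSup {s : ℝ | 0 ≤ s ∧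
          (∑' ℓ : γ, (P[|{ω | L ω = ℓ ∧ A ω = a}]) {ω | t < T ω} * P {ω | L ω = ℓ})
            ≤ ∑' ℓ : γ, (P[|{ω | L ω = ℓ ∧ A ω = 0}]) {ω | s < T ω} * P {ω | L ω = ℓ}}
        = (1 / t) * sSup {s : ℝ | 0 ≤ s ∧ P {ω | t < Ta ω} ≤ P {ω | s < T0 ω}}) := by
  have main : ∀ t : ℝ, 0 ≤ t →
      (∑' ℓ : γ, (P[|{ω | L ω = ℓ ∧ A ω = a}]) {ω | t < T ω} * P {ω | L ω = ℓ})
        = P {ω | t < Ta ω} ∧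
      (∑' ℓ : γ, (P[|{ω | L ω = ℓ ∧ A ω = 0}]) {ω | t < T ω} * P {ω | L ω = ℓ})
        = P {ω | t < T0 ω} := by
    intro t ht
    constructor
    · exact standardize_aux P A T Ta L a hA hTa hL hconsa t
        (fun ℓ hℓ => ((hsupp ℓ hℓ).2.2 t ht).1)
    · exact standardize_aux P A T T0 L 0 hA hT0 hL hcons0 t
        (fun ℓ hℓ => ((hsupp ℓ hℓ).2.2 t ht).2)
  refine ⟨main, fun t ht => ?_⟩
  congr 2
  ext s
  simp only [Set.mem_setOf_eq]
  refine and_congr_right fun hs => ?_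
  rw [(main t ht.le).1, (main s hs).2]
end
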